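/- The structure (N_t, r_t, parent_t) extracted from a tree-like multiset t — where N_t is the support of flat_F(t), r_t is the root of t, and parent_t maps each non-root element to its parent — is a tree: parent_t is a function on N_t \ {r_t} into N_t, and every element reaches the root by finitely many applications of parent_t. -/

import Mathlib

namespace CFDPaper

noncomputable section

attribute [local instance] Classical.decEq
attribute [local instance] Classical.propDecidable

/-- Depth-indexed hereditary finite multisets: `HMd A n` models the class `M_{n+1}(A)`
of the cumulative hierarchy of finite multisets over the urelements `A`. -/
@[reducible] def HMd (A : Type) : ℕ → Type
  | 0 => Multiset A
  | n + 1 => Multiset (A ⊕ HMd A n)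

variable {A B F : Type}

instance instAddHMd (A : Type) (n : ℕ) : Add (HMd A n) :=
  match n with
  | 0 => inferInstanceAs (Add (Multiset A))
  | n + 1 => inferInstanceAs (Add (Multiset (A ⊕ HMd A n)))

/-- The canonical inclusion `M_{n+1}(A) ⊆ M_{n+2}(A)`. -/
def HMd.up : ∀ n : ℕ, HMd A n → HMd A (n + 1)
  | 0, m => ((m : Multiset A).map (Sum.inl : A → A ⊕ HMd A 0) : Multiset (A ⊕ HMd A 0))
  | n + 1, m => ((m : Multiset (A ⊕ HMd A n)).map (Sum.map id (HMd.up n)) :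
      Multiset (A ⊕ HMd A (n + 1)))

/-- Iterated inclusion along `k ≤ n`. -/
def HMd.liftLe {k n : ℕ} (h : k ≤ n) (m : HMd A k) : HMd A n :=
  Nat.leRecOn h (fun {i} x => HMd.up i x) m

/-- `m` (living at some level of the hierarchy) already appears at level `r`. -/
def comesFrom (r : ℕ) (m : Σ n, HMd A n) : Prop :=
  ∃ (h : r ≤ m.1) (x : HMd A r), HMd.liftLe h x = m.2

/-- The rank of a hereditary multiset: least level of the hierarchy where it occurs
(`rank m = r` corresponds to paper-rank `r + 1`). -/
def rank (m : Σ n, HMd A n) : ℕ := sInf {r | comesFrom r m}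

/-- Equality of hereditary multisets living at different levels, via lifting. -/
def hmEq {k n : ℕ} (x : HMd A k) (y : HMd A n) : Prop :=
  HMd.liftLe (le_max_left k n) x = HMd.liftLe (le_max_right k n) y

/-- Membership of a multiset in the domain (support) of a higher-level multiset. -/
def HMd.Memb {n : ℕ} (x : HMd A n) (m : HMd A (n + 1)) : Prop :=
  Sum.inr x ∈ (m : Multiset (A ⊕ HMd A n))

/-- The flattening function: flat multiplicity of each urelement. -/
def HMd.flat : ∀ {n : ℕ}, HMd A n → Multiset A
  | 0, m => (m : Multiset A)
  | n + 1, m => (m : Multiset (A ⊕ HMd A n)).bind fun e =>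
      match e with
      | Sum.inl a => {a}
      | Sum.inr x => HMd.flat (n := n) x

/-- Top-level multiplicity of an urelement. -/
def HMd.acount : ∀ {n : ℕ}, F → HMd F n → ℕ
  | 0, f, m => (m : Multiset F).count f
  | _ + 1, f, m => (m : Multiset _).count (Sum.inl f)

/-- The multiset-ingredient relation (transitive closure of domain membership). -/
inductive Ingr (A : Type) : ∀ {k n : ℕ}, HMd A k → HMd A n → Prop
  | mem {n : ℕ} {x : HMd A n} {m : HMd A (n + 1)} : x.Memb m → Ingr A x m
  | tail {k n : ℕ} {x : HMd A k} {y : HMd A n} {m : HMd A (n + 1)} :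
      Ingr A x y → y.Memb m → Ingr A x m

/-- Disjointness of flattened domains. -/
def FDisj {k n : ℕ} (x : HMd A k) (y : HMd A n) : Prop :=
  ∀ a, a ∈ x.flat → a ∉ y.flat

/-- The singleton multiset `⌈f⌉` at each level. -/
def HMd.single : ∀ n : ℕ, A → HMd A n
  | 0, f => ({f} : Multiset A)
  | _ + 1, f => ({Sum.inl f} : Multiset _)

/-- `⌈xᶜ⌉` : the multiset containing `x` with multiplicity `c`. -/
def HMd.rep {n : ℕ} (c : ℕ) (x : HMd A n) : HMd A (n + 1) :=
  (Multiset.replicate c (Sum.inr x) : Multiset (A ⊕ HMd A n))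

/-- `⌈t₁^{n₁}, …, t_k^{n_k}⌉` built from a list of tree-multiplicity pairs. -/
def HMd.ofList {n : ℕ} (l : List (HMd A n × ℕ)) : HMd A (n + 1) :=
  ((l.map fun p => Multiset.replicate p.2 (Sum.inr p.1 : A ⊕ HMd A n)).sum :
    Multiset (A ⊕ HMd A n))

/-- A "group" multiset: one whose domain contains no urelements. -/
def HMd.NoAtoms {n : ℕ} (g : HMd A (n + 1)) : Prop :=
  ∀ a : A, Sum.inl a ∉ (g : Multiset (A ⊕ HMd A n))

/-- Tree-like multisets over `F` (Definition: singleton, solitary-extension,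
group-extension; closed under the cumulative inclusions). -/
inductive TreeLike (F : Type) : ∀ n : ℕ, HMd F n → Prop
  | sing (n : ℕ) (f : F) : TreeLike F n (HMd.single n f)
  | up {n : ℕ} {t : HMd F n} : TreeLike F n t → TreeLike F (n + 1) (HMd.up n t)
  | sol {n : ℕ} {t₁ : HMd F (n + 1)} {t₂ : HMd F n} (c : ℕ) :
      TreeLike F (n + 1) t₁ → TreeLike F n t₂ → FDisj t₁ t₂ →
      TreeLike F (n + 1) (t₁ + HMd.rep c t₂)
  | grp {n : ℕ} {t : HMd F (n + 1)} (l : List (HMd F n × ℕ)) :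
      TreeLike F (n + 1) t →
      (∀ p ∈ l, TreeLike F n p.1) →
      (∀ p ∈ l, FDisj t p.1) →
      l.Pairwise (fun p q => FDisj p.1 q.1) →
      TreeLike F (n + 2) (HMd.up (n + 1) t + HMd.rep 1 (HMd.ofList l))

/-- `x` is an ingredient of `t`, or `t` itself. -/
def IngrE {k n : ℕ} (x : HMd A k) (t : HMd A n) : Prop :=
  Ingr A x t ∨ hmEq x t

/-- `x` occurs (up to lifting) in the domain of `m`. -/
def MemUpTo {k n : ℕ} (x : HMd A k) (m : HMd A (n + 1)) : Prop :=
  ∃ y : HMd A n, HMd.Memb y m ∧ hmEq x y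

/-- `x` is the tree-like ingredient of `t` induced by (i.e. with root) `f`. -/
def RootedIngr {n : ℕ} (t : HMd F n) (f : F) {k : ℕ} (x : HMd F k) : Prop :=
  IngrE x t ∧ TreeLike F k x ∧ 0 < HMd.acount f x

/-- `p` is the parent of `f` in the tree-like multiset `t`: the induced multiset of `f`
lies in the domain of the multiset induced by `p`, directly or inside a group ingredient. -/
def IsParentIn {n : ℕ} (t : HMd F n) (f p : F) : Prop :=
  ∃ (kp : ℕ) (xp : HMd F (kp + 1)), RootedIngr t p xp ∧
    ∃ (kf : ℕ) (xf : HMd F kf), RootedIngr t f xf ∧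
      (MemUpTo xf xp ∨
        ∃ (kg : ℕ) (g : HMd F (kg + 1)), MemUpTo g xp ∧ HMd.NoAtoms g ∧ MemUpTo xf g)

/-- `f` occurs grouped in `t`: some group ingredient of `t` has a member with root `f`. -/
def InGroupOf {n : ℕ} (t : HMd F n) (f : F) : Prop :=
  ∃ (kg : ℕ) (g : HMd F (kg + 1)), Ingr F g t ∧ HMd.NoAtoms g ∧
    ∃ x : HMd F kg, HMd.Memb x g ∧ TreeLike F kg x ∧ 0 < HMd.acount f x

/-- Relaxation: set every multiplicity, at every nesting level, to 1. -/
def HMd.relax : ∀ {n : ℕ}, HMd A n → HMd A n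
  | 0, m => ((m : Multiset A).dedup : Multiset A)
  | n + 1, m =>
      (((m : Multiset (A ⊕ HMd A n)).map (Sum.map id (HMd.relax (n := n)))).dedup :
        Multiset (A ⊕ HMd A n))

/-- Renaming of urelements. -/
def HMd.mapA (g : A → B) : ∀ {n : ℕ}, HMd A n → HMd B n
  | 0, m => ((m : Multiset A).map g : Multiset B)
  | n + 1, m => ((m : Multiset (A ⊕ HMd A n)).map (Sum.map g (HMd.mapA g (n := n))) :
      Multiset (B ⊕ HMd B n))

/-- Cardinality-based feature diagrams over the feature universe `F`. -/
structure CFD (F : Type) where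
  feat : Finset F
  root : F
  root_mem : root ∈ feat
  parent : F → F
  parent_mem : ∀ f ∈ feat, f ≠ root → parent f ∈ feat
  reaches : ∀ f ∈ feat,
    Relation.ReflTransGen (fun a b => a ∈ feat ∧ a ≠ root ∧ parent a = b) f root
  groups : Finset (Finset F)
  groups_sub : ∀ G ∈ groups, ∀ f ∈ G, f ∈ feat ∧ f ≠ root
  groups_card : ∀ G ∈ groups, 1 < G.card
  groups_sib : ∀ G ∈ groups, ∀ f ∈ G, ∀ g ∈ G, parent f = parent g
  groups_disj : ∀ G ∈ groups, ∀ G' ∈ groups, G = G' ∨ Disjoint G G'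
  card : F → Set ℕ
  gcard : Finset F → Set ℕ
  card_ok : ∀ f ∈ feat, f ≠ root → (card f).Nonempty ∧ card f ≠ {0}
  gcard_ok : ∀ G ∈ groups,
    (gcard G).Finite ∧ (gcard G).Nonempty ∧ gcard G ≠ {0} ∧ ∀ c ∈ gcard G, c ≤ G.card
  parent_junk : ∀ f, ¬(f ∈ feat ∧ f ≠ root) → parent f = root
  card_junk : ∀ f, ¬(f ∈ feat ∧ f ≠ root) → card f = ∅
  gcard_junk : ∀ G, G ∉ groups → gcard G = ∅

variable {F : Type}

/-- The solitary (non-grouped) children of `f` in `D`. -/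
def solChildren (D : CFD F) (f : F) : Finset F :=
  D.feat.filter fun s => s ≠ D.root ∧ D.parent s = f ∧ ∀ G ∈ D.groups, s ∉ G

/-- The groups whose members are children of `f` in `D`. -/
def childGroups (D : CFD F) (f : F) : Finset (Finset F) :=
  D.groups.filter fun G => ∃ s ∈ G, D.parent s = f

/-- The hereditary multiset assembled from a choice of sub-products. -/
def prodMS (D : CFD F) (f : F) {n : ℕ} (hs : F → HMd F n) (hc : F → ℕ)
    (hg : Finset F → HMd F n) : HMd F (n + 1) :=
  ((({Sum.inl f} : Multiset (F ⊕ HMd F n))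
    + ((solChildren D f).val.map fun s =>
        Multiset.replicate (hc s) (Sum.inr (hs s) : F ⊕ HMd F n)).sum
    + ((childGroups D f).val.map fun G => (Sum.inr (hg G) : F ⊕ HMd F n)))
    : Multiset (F ⊕ HMd F n))

/-- The hereditary multiset assembled from a group selection. -/
def grpMS {n : ℕ} (sel : Finset F) (hs : F → HMd F n) (hc : F → ℕ) : HMd F (n + 1) :=
  ((sel.val.map fun s =>
      Multiset.replicate (hc s) (Sum.inr (hs s) : F ⊕ HMd F n)).sum :
    Multiset (F ⊕ HMd F n))

mutual
  /-- `HierProd D f m` : `m` is a hierarchical product of the subdiagram of `D` induced by `f`. -/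
  inductive HierProd {F : Type} (D : CFD F) : F → ∀ {n : ℕ}, HMd F n → Prop
    | mk {n : ℕ} (f : F) (hs : F → HMd F n) (hc : F → ℕ) (hg : Finset F → HMd F n)
        (hf : f ∈ D.feat)
        (hsol : ∀ s ∈ solChildren D f, HierProd D s (hs s))
        (hsolc : ∀ s ∈ solChildren D f, hc s ∈ D.card s)
        (hgrp : ∀ G ∈ childGroups D f, GroupProd D G (hg G)) :
        HierProd D f (prodMS D f hs hc hg)
  /-- `GroupProd D G m` : `m` is a hierarchical product associated with the group `G` of `D`. -/
  inductive GroupProd {F : Type} (D : CFD F) : Finset F → ∀ {n : ℕ}, HMd F n → Prop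
    | mk {n : ℕ} (G sel : Finset F) (hs : F → HMd F n) (hc : F → ℕ)
        (hsub : sel ⊆ G) (hG : G ∈ D.groups) (hcard : sel.card ∈ D.gcard G)
        (hmem : ∀ s ∈ sel, HierProd D s (hs s))
        (hmemc : ∀ s ∈ sel, hc s ∈ D.card s) :
        GroupProd D G (grpMS sel hs hc)
end

/-- The hierarchical theory of `D` (as a set of hereditary multisets at all levels). -/
def ProductsSet (D : CFD F) : Set (Σ n, HMd F n) := {m | HierProd D D.root m.2}

/-- A set of (tree-like) multisets is mergeable if a single CFD represents all of them. -/
def Mergeable (U : Set (Σ n, HMd F n)) : Prop :=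
  ∃ D : CFD F, ∀ m ∈ U, HierProd D D.root m.2

/-- A set is completely mergeable if it is exactly the hierarchical theory of some CFD. -/
def CompletelyMergeable (U : Set (Σ n, HMd F n)) : Prop :=
  ∃ D : CFD F, U = ProductsSet D

/-- Pointwise relaxation of a set of hereditary multisets. -/
def relaxSet (U : Set (Σ n, HMd F n)) : Set (Σ n, HMd F n) :=
  {x | ∃ m ∈ U, x = ⟨m.1, HMd.relax m.2⟩}

/-- The flat products of `D` (Definition of flat theory). -/
def FlatProd (D : CFD F) (m : Multiset F) : Prop :=
  (∀ f ∈ m, f ∈ D.feat) ∧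
  m.count D.root = 1 ∧
  (∀ f ∈ D.feat, f ≠ D.root → 0 < m.count f →
    ∃ c ∈ D.card f, m.count f = c * m.count (D.parent f)) ∧
  (∀ f ∈ D.feat, f ≠ D.root → (∀ G ∈ D.groups, f ∉ G) → 0 ∉ D.card f →
    0 < m.count (D.parent f) → 0 < m.count f) ∧
  (∀ G ∈ D.groups, ∀ g ∈ G, 0 < m.count (D.parent g) →
    (G.filter fun f => 0 < m.count f).card ∈ D.gcard G)

/-- Rooted (possibly countably infinite) trees with explicit parent function. -/
structure RTree (N : Type) where
  nodes : Set N
  countable : nodes.Countable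
  root : N
  root_mem : root ∈ nodes
  parent : N → N
  parent_mem : ∀ f ∈ nodes, f ≠ root → parent f ∈ nodes
  reaches : ∀ f ∈ nodes,
    Relation.ReflTransGen (fun a b => a ∈ nodes ∧ a ≠ root ∧ parent a = b) f root


section Aux

theorem up_injective : ∀ (n : ℕ), Function.Injective (HMd.up (A := A) n)
  | 0 => Multiset.map_injective Sum.inl_injective
  | n + 1 => Multiset.map_injective (Function.injective_id.sumMap (up_injective n))

theorem liftLe_self {k : ℕ} (h : k ≤ k) (x : HMd A k) : HMd.liftLe h x = x :=
  Nat.leRecOn_self x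

theorem liftLe_succ {k n : ℕ} (h : k ≤ n) (h2 : k ≤ n + 1) (x : HMd A k) :
    HMd.liftLe h2 x = HMd.up n (HMd.liftLe h x) :=
  Nat.leRecOn_succ h x

theorem liftLe_liftLe {a b c : ℕ} (h1 : a ≤ b) (h2 : b ≤ c) (x : HMd A a) :
    HMd.liftLe h2 (HMd.liftLe h1 x) = HMd.liftLe (h1.trans h2) x :=
  (Nat.leRecOn_trans h1 h2 x).symm

theorem liftLe_injective {k n : ℕ} (h : k ≤ n) : Function.Injective (HMd.liftLe (A := A) h) := by
  induction n, h using Nat.le_induction with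
  | base => intro x y e; rwa [liftLe_self, liftLe_self] at e
  | succ n h ih =>
    intro x y e
    rw [liftLe_succ h, liftLe_succ h] at e
    exact ih (up_injective n e)

theorem flat_up : ∀ (n : ℕ) (x : HMd A n), (HMd.up n x).flat = x.flat
  | 0, x => by
    show (Multiset.map Sum.inl x).bind _ = _
    rw [Multiset.bind_map]
    have := (Multiset.bind_singleton (s := x) id).trans (Multiset.map_id x)
    exact this
  | n + 1, x => by
    show (Multiset.map (Sum.map id (HMd.up n)) x).bind _ = x.bind _
    rw [Multiset.bind_map]
    refine Multiset.bind_congr (fun e _ => ?_)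
    cases e with
    | inl a => rfl
    | inr y => exact flat_up n y

theorem acount_up (f : F) : ∀ (n : ℕ) (x : HMd F n), HMd.acount f (HMd.up n x) = HMd.acount f x
  | 0, x => by
    simp only [HMd.acount, HMd.up]
    have := Multiset.count_map_eq_count' (Sum.inl : F → F ⊕ HMd F 0) x Sum.inl_injective f
    convert this using 2 <;> exact Subsingleton.elim _ _
  | n + 1, x => by
    simp only [HMd.acount, HMd.up]
    have h : (Sum.inl f : F ⊕ HMd F (n+1)) = Sum.map id (HMd.up n) (Sum.inl f) := rfl
    rw [h]
    have := Multiset.count_map_eq_count' (Sum.map id (HMd.up n)) x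
      (Function.injective_id.sumMap (up_injective n)) (Sum.inl f)
    convert this using 2 <;> exact Subsingleton.elim _ _

theorem flat_liftLe {k n : ℕ} (h : k ≤ n) (x : HMd A k) : (HMd.liftLe h x).flat = x.flat := by
  induction n, h using Nat.le_induction with
  | base => rw [liftLe_self]
  | succ n h ih => rw [liftLe_succ h, flat_up, ih]

theorem acount_liftLe (f : F) {k n : ℕ} (h : k ≤ n) (x : HMd F k) :
    HMd.acount f (HMd.liftLe h x) = HMd.acount f x := by
  induction n, h using Nat.le_induction with
  | base => rw [liftLe_self]
  | succ n h ih => rw [liftLe_succ h, acount_up, ih]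

theorem hmEq_iff {k n : ℕ} {x : HMd A k} {y : HMd A n} :
    hmEq x y ↔ ∃ (N : ℕ) (h1 : k ≤ N) (h2 : n ≤ N), HMd.liftLe h1 x = HMd.liftLe h2 y := by
  constructor
  · intro h; exact ⟨max k n, le_max_left _ _, le_max_right _ _, h⟩
  · rintro ⟨N, h1, h2, e⟩
    set M := max k n with hM
    set P := max M N with hP
    have hMP : M ≤ P := le_max_left _ _
    have hNP : N ≤ P := le_max_right _ _
    apply liftLe_injective hMP
    rw [liftLe_liftLe, liftLe_liftLe]
    have := congrArg (HMd.liftLe hNP) e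
    rw [liftLe_liftLe, liftLe_liftLe] at this
    exact this

theorem hmEq_refl {k : ℕ} (x : HMd A k) : hmEq x x := rfl

theorem hmEq_symm {k n : ℕ} {x : HMd A k} {y : HMd A n} (h : hmEq x y) : hmEq y x := by
  rw [hmEq_iff] at h ⊢
  obtain ⟨N, h1, h2, e⟩ := h
  exact ⟨N, h2, h1, e.symm⟩

theorem hmEq_trans {k n m : ℕ} {x : HMd A k} {y : HMd A n} {z : HMd A m}
    (h1 : hmEq x y) (h2 : hmEq y z) : hmEq x z := by
  rw [hmEq_iff] at h1 h2 ⊢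
  obtain ⟨N1, a1, b1, e1⟩ := h1
  obtain ⟨N2, a2, b2, e2⟩ := h2
  refine ⟨max N1 N2, a1.trans (le_max_left _ _), b2.trans (le_max_right _ _), ?_⟩
  have e1' := congrArg (HMd.liftLe (le_max_left N1 N2)) e1
  have e2' := congrArg (HMd.liftLe (le_max_right N1 N2)) e2
  rw [liftLe_liftLe, liftLe_liftLe] at e1' e2'
  exact e1'.trans e2'

theorem hmEq_up {k : ℕ} (x : HMd A k) : hmEq (HMd.up k x) x := by
  rw [hmEq_iff]
  exact ⟨k + 1, le_refl _, Nat.le_succ k, by rw [liftLe_self, liftLe_succ (le_refl k), liftLe_self]⟩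

theorem hmEq_same {k : ℕ} {x y : HMd A k} : hmEq x y ↔ x = y := by
  constructor
  · intro h; rw [hmEq_iff] at h; obtain ⟨N, h1, h2, e⟩ := h; exact liftLe_injective h1 e
  · rintro rfl; exact hmEq_refl x

theorem hmEq_liftLe {k n : ℕ} (h : k ≤ n) (x : HMd A k) : hmEq (HMd.liftLe h x) x := by
  rw [hmEq_iff]; exact ⟨n, le_refl n, h, by rw [liftLe_self]⟩

theorem hmEq_acount {k n : ℕ} {x : HMd F k} {y : HMd F n} (h : hmEq x y) (f : F) :
    HMd.acount f x = HMd.acount f y := by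
  rw [hmEq_iff] at h
  obtain ⟨N, h1, h2, e⟩ := h
  rw [← acount_liftLe f h1 x, ← acount_liftLe f h2 y, e]

theorem hmEq_flat {k n : ℕ} {x : HMd A k} {y : HMd A n} (h : hmEq x y) : x.flat = y.flat := by
  rw [hmEq_iff] at h
  obtain ⟨N, h1, h2, e⟩ := h
  rw [← flat_liftLe h1 x, ← flat_liftLe h2 y, e]

theorem hmEq_up_congr {k n : ℕ} {x : HMd A k} {y : HMd A n} (h : hmEq x y) :
    hmEq (HMd.up k x) (HMd.up n y) :=
  hmEq_trans (hmEq_up x) (hmEq_trans h (hmEq_symm (hmEq_up y)))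


-- Memb lemmas
theorem memb_up_zero (m : HMd A 0) (z : HMd A 0) : ¬ z.Memb (HMd.up 0 m) := by
  intro h
  simp only [HMd.Memb, HMd.up, Multiset.mem_map] at h
  obtain ⟨a, _, ha⟩ := h
  exact Sum.inl_ne_inr ha

theorem memb_up_succ {n : ℕ} (m : HMd A (n + 1)) (z : HMd A (n + 1)) :
    z.Memb (HMd.up (n + 1) m) ↔ ∃ w, w.Memb m ∧ z = HMd.up n w := by
  simp only [HMd.Memb, HMd.up, Multiset.mem_map]
  constructor
  · rintro ⟨e, he, hee⟩
    cases e with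
    | inl a => exact (Sum.inl_ne_inr hee).elim
    | inr w => exact ⟨w, he, (Sum.inr.inj hee).symm⟩
  · rintro ⟨w, hw, rfl⟩
    exact ⟨Sum.inr w, hw, rfl⟩

def MembL {k : ℕ} (x : HMd A k) : ∀ {n : ℕ}, HMd A n → Prop
  | 0, _ => False
  | _ + 1, m => ∃ y, HMd.Memb y m ∧ hmEq x y

theorem membL_succ {k n : ℕ} (x : HMd A k) (m : HMd A (n + 1)) :
    MembL x m ↔ ∃ y, HMd.Memb y m ∧ hmEq x y := Iff.rfl

theorem membL_up {k n : ℕ} (x : HMd A k) (m : HMd A n) :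
    MembL x (HMd.up n m) ↔ MembL x m := by
  cases n with
  | zero =>
    simp only [MembL, iff_false]
    rintro ⟨y, hy, _⟩
    exact memb_up_zero m y hy
  | succ n =>
    simp only [MembL]
    constructor
    · rintro ⟨y, hy, he⟩
      rw [memb_up_succ] at hy
      obtain ⟨w, hw, rfl⟩ := hy
      exact ⟨w, hw, hmEq_trans he (hmEq_up w)⟩
    · rintro ⟨y, hy, he⟩
      exact ⟨HMd.up n y, (memb_up_succ m _).mpr ⟨y, hy, rfl⟩, hmEq_trans he (hmEq_symm (hmEq_up y))⟩

theorem membL_liftLe {k a b : ℕ} (x : HMd A k) (h : a ≤ b) (m : HMd A a) :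
    MembL x (HMd.liftLe h m) ↔ MembL x m := by
  induction b, h using Nat.le_induction with
  | base => rw [liftLe_self]
  | succ b h ih => rw [liftLe_succ h, membL_up, ih]

theorem membL_congr_right {k a b : ℕ} (x : HMd A k) {m : HMd A a} {m' : HMd A b}
    (h : hmEq m m') : MembL x m ↔ MembL x m' := by
  rw [hmEq_iff] at h
  obtain ⟨N, h1, h2, e⟩ := h
  rw [← membL_liftLe x h1 m, ← membL_liftLe x h2 m', e]

theorem membL_congr_left {k k' a : ℕ} {x : HMd A k} {x' : HMd A k'} (h : hmEq x x')
    (m : HMd A a) : MembL x m ↔ MembL x' m := by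
  cases a with
  | zero => simp [MembL]
  | succ a =>
    simp only [MembL]
    exact ⟨fun ⟨y, hy, he⟩ => ⟨y, hy, hmEq_trans (hmEq_symm h) he⟩,
           fun ⟨y, hy, he⟩ => ⟨y, hy, hmEq_trans h he⟩⟩

theorem memb_memL {n : ℕ} {y : HMd A n} {m : HMd A (n + 1)} (h : y.Memb m) : MembL y m :=
  ⟨y, h, hmEq_refl y⟩


-- structural Memb lemmas
theorem memb_add {n : ℕ} {y : HMd A n} {a b : HMd A (n + 1)} :
    y.Memb (a + b) ↔ y.Memb a ∨ y.Memb b := Multiset.mem_add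

theorem memb_rep {n : ℕ} {y z : HMd A n} {c : ℕ} :
    y.Memb (HMd.rep c z) ↔ 0 < c ∧ y = z := by
  simp only [HMd.Memb, HMd.rep, Multiset.mem_replicate, Ne, Sum.inr.injEq]
  exact and_congr_left' (by omega)

theorem memb_ofList {n : ℕ} {y : HMd A n} {l : List (HMd A n × ℕ)} :
    y.Memb (HMd.ofList l) ↔ ∃ p ∈ l, 0 < p.2 ∧ y = p.1 := by
  induction l with
  | nil => simp [HMd.ofList, HMd.Memb]
  | cons p l ih =>
    have hsplit : HMd.Memb y (HMd.ofList (p :: l)) ↔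
        (Sum.inr y ∈ Multiset.replicate p.2 (Sum.inr p.1 : A ⊕ HMd A n)) ∨
          HMd.Memb y (HMd.ofList l) := by
      simp only [HMd.ofList, List.map_cons, List.sum_cons, HMd.Memb]
      exact Multiset.mem_add
    rw [hsplit, Multiset.mem_replicate]
    constructor
    · rintro (⟨h1, h2⟩ | h)
      · exact ⟨p, List.mem_cons_self, by omega, Sum.inr.inj h2⟩
      · obtain ⟨q, hq, h1, rfl⟩ := ih.mp h
        exact ⟨q, List.mem_cons_of_mem _ hq, h1, rfl⟩
    · rintro ⟨q, hq, h1, rfl⟩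
      rcases List.mem_cons.mp hq with rfl | hq
      · exact Or.inl ⟨by omega, rfl⟩
      · exact Or.inr (ih.mpr ⟨q, hq, h1, rfl⟩)

-- Ingr lemmas
theorem ingr_level_zero {k : ℕ} {x : HMd A k} {m : HMd A 0} : ¬ Ingr A x m := by
  intro h
  generalize hN : (0 : ℕ) = N at *
  induction h with
  | mem _ => omega
  | tail _ _ _ => omega

theorem memb_up_fwd {n : ℕ} {z : HMd A n} {m : HMd A (n + 1)} (h : z.Memb m) :
    (HMd.up n z).Memb (HMd.up (n + 1) m) := by
  simp only [HMd.Memb, HMd.up, Multiset.mem_map]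
  exact ⟨Sum.inr z, h, rfl⟩

theorem ingr_up_fwd {k n : ℕ} {x : HMd A k} {m : HMd A n} (h : Ingr A x m) :
    Ingr A (HMd.up k x) (HMd.up n m) := by
  induction h with
  | mem hx => exact Ingr.mem (memb_up_fwd hx)
  | tail _ hym ih => exact Ingr.tail ih (memb_up_fwd hym)

theorem ingr_iff {k n : ℕ} (x : HMd A k) (m : HMd A (n + 1)) :
    Ingr A x m ↔ ∃ y : HMd A n, y.Memb m ∧
      ((⟨k, x⟩ : Σ j, HMd A j) = ⟨n, y⟩ ∨ Ingr A x y) := by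
  constructor
  · intro h
    cases h with
    | mem hx => exact ⟨x, hx, Or.inl rfl⟩
    | tail hxy hym => exact ⟨_, hym, Or.inr hxy⟩
  · rintro ⟨y, hy, he | hI⟩
    · injection he with h1 h2
      subst h1
      rw [eq_of_heq h2]
      exact Ingr.mem hy
    · exact Ingr.tail hI hy

theorem ingr_up_inv : ∀ {n k : ℕ} {x : HMd A k} {t : HMd A n}, Ingr A x (HMd.up n t) →
    ∃ (k' : ℕ) (y : HMd A k'), Ingr A y t ∧
      (⟨k, x⟩ : Σ j, HMd A j) = ⟨k' + 1, HMd.up k' y⟩ := by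
  intro n
  induction n with
  | zero =>
    intro k x t h
    rw [ingr_iff] at h
    obtain ⟨y, hy, _⟩ := h
    exact absurd hy (memb_up_zero _ _)
  | succ n ih =>
    intro k x t h
    rw [ingr_iff] at h
    obtain ⟨y, hy, hcase⟩ := h
    obtain ⟨w, hw, rfl⟩ := (memb_up_succ t y).mp hy
    rcases hcase with he | hI
    · injection he with h1 h2
      subst h1
      exact ⟨n, w, Ingr.mem hw, by rw [eq_of_heq h2]⟩
    · obtain ⟨k', y', hy', he⟩ := ih hI
      exact ⟨k', y', Ingr.tail hy' hw, he⟩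

theorem ingr_mono {k n : ℕ} {x : HMd A k} {m m' : HMd A (n + 1)}
    (hm : ∀ (y : HMd A n), y.Memb m → y.Memb m') (h : Ingr A x m) : Ingr A x m' := by
  cases h with
  | mem hx => exact Ingr.mem (hm _ hx)
  | tail hxy hym => exact Ingr.tail hxy (hm _ hym)

theorem ingr_add_cases {k n : ℕ} {x : HMd A k} {a b : HMd A (n + 1)}
    (h : Ingr A x (a + b)) :
    Ingr A x a ∨ ∃ y : HMd A n, y.Memb b ∧
      ((⟨k, x⟩ : Σ j, HMd A j) = ⟨n, y⟩ ∨ Ingr A x y) := by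
  cases h with
  | mem hx =>
    rcases memb_add.mp hx with h | h
    · exact Or.inl (Ingr.mem h)
    · exact Or.inr ⟨x, h, Or.inl rfl⟩
  | tail hxy hym =>
    rcases memb_add.mp hym with h | h
    · exact Or.inl (Ingr.tail hxy h)
    · exact Or.inr ⟨_, h, Or.inr hxy⟩

theorem ingr_ofList_cases {k n : ℕ} {x : HMd A k} {l : List (HMd A n × ℕ)}
    (h : Ingr A x (HMd.ofList l)) :
    ∃ p ∈ l, 0 < p.2 ∧ ((⟨k, x⟩ : Σ j, HMd A j) = ⟨n, p.1⟩ ∨ Ingr A x p.1) := by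
  cases h with
  | mem hx =>
    obtain ⟨p, hp, h2, rfl⟩ := memb_ofList.mp hx
    exact ⟨p, hp, h2, Or.inl rfl⟩
  | tail hxy hym =>
    obtain ⟨p, hp, h2, rfl⟩ := memb_ofList.mp hym
    exact ⟨p, hp, h2, Or.inr hxy⟩

-- flat/acount structural lemmas (at successor levels)
theorem flat_succ {n : ℕ} (m : HMd A (n + 1)) :
    m.flat = (m : Multiset (A ⊕ HMd A n)).bind fun e =>
      match e with
      | Sum.inl a => {a}
      | Sum.inr x => HMd.flat x := rfl

theorem flat_add {n : ℕ} (a b : HMd A (n + 1)) : (a + b).flat = a.flat + b.flat :=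
  Multiset.add_bind _ _ _

theorem flat_rep {n : ℕ} (c : ℕ) (z : HMd A n) : (HMd.rep c z).flat = c • z.flat := by
  induction c with
  | zero => simp [HMd.rep, flat_succ]
  | succ c ih =>
    rw [flat_succ, HMd.rep, Multiset.replicate_succ, Multiset.cons_bind]
    rw [flat_succ, HMd.rep] at ih
    rw [ih, succ_nsmul']

theorem acount_add {n : ℕ} (f : A) (a b : HMd A (n + 1)) :
    HMd.acount f (a + b) = HMd.acount f a + HMd.acount f b := Multiset.count_add _ _ _


theorem flat_single (n : ℕ) (f : A) : (HMd.single n f).flat = {f} := by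
  cases n with
  | zero => rfl
  | succ n => simp [HMd.single, flat_succ, Multiset.singleton_bind]

theorem acount_single (n : ℕ) (f f' : A) :
    HMd.acount f' (HMd.single n f) = if f' = f then 1 else 0 := by
  cases n with
  | zero =>
    simp only [HMd.acount, HMd.single, Multiset.count_singleton]
  | succ n =>
    simp only [HMd.acount, HMd.single, Multiset.count_singleton, Sum.inl.injEq]

theorem acount_rep {n : ℕ} (f : A) (c : ℕ) (z : HMd A n) :
    HMd.acount f (HMd.rep c z) = 0 := by
  simp only [HMd.acount, HMd.rep, Multiset.count_replicate]
  simp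

theorem ofList_cons {n : ℕ} (p : HMd A n × ℕ) (l : List (HMd A n × ℕ)) :
    HMd.ofList (p :: l) = HMd.rep p.2 p.1 + HMd.ofList l := by
  simp [HMd.ofList, HMd.rep]

theorem acount_ofList {n : ℕ} (f : A) (l : List (HMd A n × ℕ)) :
    HMd.acount f (HMd.ofList l) = 0 := by
  induction l with
  | nil => rfl
  | cons p l ih => rw [ofList_cons, acount_add, acount_rep, ih]

theorem noAtoms_iff {n : ℕ} (g : HMd A (n + 1)) :
    g.NoAtoms ↔ ∀ a : A, HMd.acount a g = 0 := by
  simp only [HMd.NoAtoms, HMd.acount, ← Multiset.count_eq_zero]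

theorem noAtoms_ofList {n : ℕ} (l : List (HMd A n × ℕ)) : (HMd.ofList l).NoAtoms :=
  (noAtoms_iff _).mpr fun a => acount_ofList a l

theorem mem_flat_succ {n : ℕ} (a : A) (m : HMd A (n + 1)) :
    a ∈ m.flat ↔ (Sum.inl a ∈ (m : Multiset (A ⊕ HMd A n)) ∨
      ∃ z : HMd A n, z.Memb m ∧ a ∈ z.flat) := by
  rw [flat_succ, Multiset.mem_bind]
  constructor
  · rintro ⟨e, he, ha⟩
    cases e with
    | inl b => simp only [Multiset.mem_singleton] at ha; subst ha; exact Or.inl he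
    | inr z => exact Or.inr ⟨z, he, ha⟩
  · rintro (h | ⟨z, hz, ha⟩)
    · exact ⟨Sum.inl a, h, by simp⟩
    · exact ⟨Sum.inr z, hz, ha⟩

theorem acount_pos_mem_flat {n : ℕ} {f : A} {x : HMd A n} (h : 0 < HMd.acount f x) :
    f ∈ x.flat := by
  cases n with
  | zero => exact Multiset.count_pos.mp h
  | succ n =>
    rw [mem_flat_succ]
    exact Or.inl (Multiset.count_pos.mp h)

theorem mem_flat_rep {n : ℕ} {a : A} {c : ℕ} {z : HMd A n} :
    a ∈ (HMd.rep c z).flat ↔ 0 < c ∧ a ∈ z.flat := by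
  rw [flat_rep, Multiset.mem_nsmul]
  exact and_congr_left' (by omega)

theorem mem_flat_ofList {n : ℕ} {a : A} {l : List (HMd A n × ℕ)} :
    a ∈ (HMd.ofList l).flat ↔ ∃ p ∈ l, 0 < p.2 ∧ a ∈ p.1.flat := by
  induction l with
  | nil => simp [HMd.ofList, flat_succ]
  | cons p l ih =>
    rw [ofList_cons, flat_add, Multiset.mem_add, mem_flat_rep, ih]
    constructor
    · rintro (⟨h1, h2⟩ | ⟨q, hq, h1, h2⟩)
      · exact ⟨p, List.mem_cons_self, h1, h2⟩
      · exact ⟨q, List.mem_cons_of_mem _ hq, h1, h2⟩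
    · rintro ⟨q, hq, h1, h2⟩
      rcases List.mem_cons.mp hq with rfl | hq
      · exact Or.inl ⟨h1, h2⟩
      · exact Or.inr ⟨q, hq, h1, h2⟩

-- ==================== invariant ====================

def MClass (S : Multiset F) (r : F) (par : F → F) (sub : F → Σ k, HMd F k)
    (p : F) (z : Σ j, HMd F j) : Prop :=
  (∃ f, f ∈ S ∧ f ≠ r ∧ par f = p ∧ hmEq z.2 (sub f).2) ∨
  ((∀ a, HMd.acount a z.2 = 0) ∧ ∀ w : Σ i, HMd F i, MembL w.2 z.2 →
      ∃ f, f ∈ S ∧ f ≠ r ∧ par f = p ∧ hmEq w.2 (sub f).2)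

theorem MClass.congr_z {S : Multiset F} {r par sub p} {z z' : Σ j, HMd F j}
    (hz : hmEq z.2 z'.2) (h : MClass S r par sub p z) : MClass S r par sub p z' := by
  rcases h with ⟨f, h1, h2, h3, h4⟩ | ⟨h1, h2⟩
  · exact Or.inl ⟨f, h1, h2, h3, hmEq_trans (hmEq_symm hz) h4⟩
  · refine Or.inr ⟨fun a => (hmEq_acount (hmEq_symm hz) a).trans (h1 a), fun w hw => ?_⟩
    exact h2 w ((membL_congr_right w.2 (hmEq_symm hz)).mp hw)

theorem MClass.mono {S S' : Multiset F} {r r' : F} {par par' : F → F}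
    {sub sub' : F → Σ k, HMd F k} {p : F} {z : Σ j, HMd F j}
    (hmv : ∀ f, f ∈ S → f ≠ r → f ∈ S' ∧ f ≠ r' ∧ par' f = par f ∧ hmEq (sub' f).2 (sub f).2)
    (h : MClass S r par sub p z) : MClass S' r' par' sub' p z := by
  rcases h with ⟨f, h1, h2, h3, h4⟩ | ⟨h1, h2⟩
  · obtain ⟨k1, k2, k3, k4⟩ := hmv f h1 h2
    exact Or.inl ⟨f, k1, k2, k3.trans h3, hmEq_trans h4 (hmEq_symm k4)⟩
  · refine Or.inr ⟨h1, fun w hw => ?_⟩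
    obtain ⟨f, h1', h2', h3', h4'⟩ := h2 w hw
    obtain ⟨k1, k2, k3, k4⟩ := hmv f h1' h2'
    exact ⟨f, k1, k2, k3.trans h3', hmEq_trans h4' (hmEq_symm k4)⟩

structure InvData {n : ℕ} (t : HMd F n) : Type where
  r : F
  sub : F → Σ k, HMd F k
  par : F → F
  a1 : ∀ f, 0 < HMd.acount f t ↔ f = r
  a2 : r ∈ t.flat
  a3 : hmEq (sub r).2 t
  a4i : ∀ f ∈ t.flat, IngrE (sub f).2 t
  a4t : ∀ f ∈ t.flat, TreeLike F (sub f).1 (sub f).2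
  a4a : ∀ f ∈ t.flat, ∀ f', (0 < HMd.acount f' (sub f).2 ↔ f' = f)
  a5 : ∀ (k : ℕ) (x : HMd F k) (f : F), Ingr F x t → 0 < HMd.acount f x →
        f ∈ t.flat ∧ f ≠ r ∧ hmEq x (sub f).2
  a6 : ∀ p ∈ t.flat, ∀ z : Σ j, HMd F j, MembL z.2 (sub p).2 →
        MClass t.flat r par sub p z
  a7 : ∀ f ∈ t.flat, f ≠ r → par f ∈ t.flat ∧
        (MembL (sub f).2 (sub (par f)).2 ∨
          ∃ z : Σ j, HMd F j, MembL z.2 (sub (par f)).2 ∧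
            (∀ a, HMd.acount a z.2 = 0) ∧ MembL (sub f).2 z.2)
  a8 : ∀ f ∈ t.flat, Relation.ReflTransGen (fun a b => a ∈ t.flat ∧ a ≠ r ∧ par a = b) f r


theorem ingr_single {k n : ℕ} {x : HMd A k} (f : A) : ¬ Ingr A x (HMd.single n f) := by
  cases n with
  | zero => exact ingr_level_zero
  | succ n =>
    intro h
    rw [ingr_iff] at h
    obtain ⟨y, hy, _⟩ := h
    simp [HMd.Memb, HMd.single] at hy

theorem membL_single {k n : ℕ} (x : HMd A k) (f : A) : ¬ MembL x (HMd.single n f) := by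
  cases n with
  | zero => exact id
  | succ n =>
    rintro ⟨y, hy, _⟩
    simp [HMd.Memb, HMd.single] at hy

def invData_single (n : ℕ) (f : F) : InvData (HMd.single n f) where
  r := f
  sub := fun _ => ⟨n, HMd.single n f⟩
  par := id
  a1 := by intro f'; rw [acount_single]; split <;> simp_all
  a2 := by rw [flat_single]; exact Multiset.mem_singleton_self f
  a3 := hmEq_refl _
  a4i := fun _ _ => Or.inr (hmEq_refl _)
  a4t := fun _ _ => TreeLike.sing n f
  a4a := by
    intro f' hf' f''
    rw [flat_single, Multiset.mem_singleton] at hf'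
    subst hf'
    rw [acount_single]; split <;> simp_all
  a5 := fun k x f' hI _ => absurd hI (ingr_single f)
  a6 := fun p _ z hz => absurd hz (membL_single z.2 f)
  a7 := by
    intro f' hf' hne
    rw [flat_single, Multiset.mem_singleton] at hf'
    exact absurd hf' hne
  a8 := by
    intro f' hf'
    rw [flat_single, Multiset.mem_singleton] at hf'
    subst hf'
    exact Relation.ReflTransGen.refl

def invData_up {n : ℕ} {t : HMd F n} (ht : TreeLike F n t) (d : InvData t) :
    InvData (HMd.up n t) := by
  refine
    { r := d.r
      sub := fun f => if f = d.r then ⟨n + 1, HMd.up n t⟩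
        else ⟨(d.sub f).1 + 1, HMd.up _ (d.sub f).2⟩
      par := d.par
      a1 := ?a1, a2 := ?a2, a3 := ?a3, a4i := ?a4i, a4t := ?a4t, a4a := ?a4a, a5 := ?a5
      a6 := ?a6, a7 := ?a7, a8 := ?a8 }
  case a1 => intro f; rw [acount_up]; exact d.a1 f
  case a2 => rw [flat_up]; exact d.a2
  case a3 => beta_reduce; rw [if_pos rfl]; exact hmEq_refl _
  all_goals (
    have hsubAll : ∀ g ∈ t.flat, hmEq ((if g = d.r then (⟨n + 1, HMd.up n t⟩ : Σ k, HMd F k)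
        else ⟨(d.sub g).1 + 1, HMd.up _ (d.sub g).2⟩)).2 (d.sub g).2 := by
      intro g hg
      by_cases hgr : g = d.r
      · subst hgr; rw [if_pos rfl]
        exact hmEq_trans (hmEq_up t) (hmEq_symm d.a3)
      · rw [if_neg hgr]; exact hmEq_up _)
  case a4i =>
    intro f hf
    beta_reduce
    rw [flat_up] at hf
    by_cases hfr : f = d.r
    · subst hfr; rw [if_pos rfl]; exact Or.inr (hmEq_refl _)
    · rw [if_neg hfr]
      rcases d.a4i f hf with hI | hE
      · exact Or.inl (ingr_up_fwd hI)
      · exfalso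
        have h1 : 0 < HMd.acount f (d.sub f).2 := (d.a4a f hf f).mpr rfl
        rw [hmEq_acount hE f] at h1
        exact hfr ((d.a1 f).mp h1)
  case a4t =>
    intro f hf
    beta_reduce
    rw [flat_up] at hf
    by_cases hfr : f = d.r
    · subst hfr; rw [if_pos rfl]; exact TreeLike.up ht
    · rw [if_neg hfr]; exact TreeLike.up (d.a4t f hf)
  case a4a =>
    intro f hf f'
    rw [flat_up] at hf
    rw [hmEq_acount (hsubAll f hf) f']
    exact d.a4a f hf f'
  case a5 =>
    intro k x f hI hc
    obtain ⟨k', y, hy, he⟩ := ingr_up_inv hI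
    injection he with e1 e2
    subst e1
    rw [eq_of_heq e2] at hc ⊢
    rw [acount_up] at hc
    obtain ⟨h1, h2, h3⟩ := d.a5 k' y f hy hc
    rw [flat_up]
    exact ⟨h1, h2, hmEq_trans (hmEq_up y) (hmEq_trans h3 (hmEq_symm (hsubAll f h1)))⟩
  case a6 =>
    intro p hp z hz
    rw [flat_up] at hp
    rw [membL_congr_right z.2 (hsubAll p hp)] at hz
    have := d.a6 p hp z hz
    rw [flat_up]
    refine MClass.mono (fun f hf hfr => ⟨hf, hfr, rfl, hsubAll f hf⟩) this
  case a7 =>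
    intro f hf hfr
    rw [flat_up] at hf
    obtain ⟨h1, h2⟩ := d.a7 f hf hfr
    rw [flat_up]
    refine ⟨h1, ?_⟩
    rcases h2 with h2 | ⟨z, hz1, hz2, hz3⟩
    · left
      rw [membL_congr_left (hsubAll f hf) _, membL_congr_right _ (hsubAll (d.par f) h1)]
      exact h2
    · right
      refine ⟨z, ?_, hz2, ?_⟩
      · rw [membL_congr_right z.2 (hsubAll (d.par f) h1)]; exact hz1
      · rw [membL_congr_left (hsubAll f hf) z.2]; exact hz3
  case a8 =>
    intro f hf
    rw [flat_up] at hf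
    have := d.a8 f hf
    refine Relation.ReflTransGen.mono (fun a b ⟨u1, u2, u3⟩ => ⟨?_, u2, u3⟩) _ _ this
    rw [flat_up]
    exact u1

theorem hmEq_of_sigma_eq {s s' : Σ k, HMd A k} (h : s = s') : hmEq s.2 s'.2 := by
  subst h; exact hmEq_refl _

def invData_sol {n : ℕ} {t₁ : HMd F (n + 1)} {t₂ : HMd F n} (c : ℕ)
    (ht1 : TreeLike F (n + 1) t₁) (ht2 : TreeLike F n t₂) (hd : FDisj t₁ t₂)
    (d1 : InvData t₁) (d2 : InvData t₂) : InvData (t₁ + HMd.rep c t₂) := by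
  cases c with
  | zero =>
    rw [show t₁ + HMd.rep 0 t₂ = t₁ from by
      show t₁ + (Multiset.replicate 0 _ : Multiset _) = t₁
      rw [Multiset.replicate_zero]; exact add_zero t₁]
    exact d1
  | succ c =>
  set T := t₁ + HMd.rep (c + 1) t₂ with hT
  have hTtree : TreeLike F (n + 1) T := TreeLike.sol (c + 1) ht1 ht2 hd
  have hflatT : T.flat = t₁.flat + (c + 1) • t₂.flat := by
    rw [hT, flat_add, flat_rep]
  have hmemT : ∀ a : F, a ∈ T.flat ↔ a ∈ t₁.flat ∨ a ∈ t₂.flat := by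
    intro a
    rw [hflatT, Multiset.mem_add, Multiset.mem_nsmul]
    simp
  have hne1 : ∀ f ∈ t₂.flat, f ≠ d1.r := fun f hf h => hd d1.r d1.a2 (h ▸ hf)
  have hnotmem2 : ∀ f ∈ t₁.flat, f ∉ t₂.flat := hd
  have hmembT : ∀ y : HMd F n, y.Memb T ↔ (y.Memb t₁ ∨ y = t₂) := by
    intro y
    rw [hT, memb_add, memb_rep]
    simp
  have hmembTt2 : HMd.Memb t₂ T := (hmembT t₂).mpr (Or.inr rfl)
  have hacT : ∀ f, HMd.acount f T = HMd.acount f t₁ := by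
    intro f
    rw [hT, acount_add, acount_rep]
    omega
  set Ssub : F → Σ k, HMd F k := fun f =>
    if f ∈ t₂.flat then (if f = d2.r then ⟨n, t₂⟩ else d2.sub f)
    else (if f = d1.r then ⟨n + 1, T⟩ else d1.sub f) with hS
  set Ppar : F → F := fun f =>
    if f ∈ t₂.flat then (if f = d2.r then d1.r else d2.par f) else d1.par f with hP
  have hSr1 : Ssub d1.r = ⟨n + 1, T⟩ := by
    simp only [hS]
    rw [if_neg (hnotmem2 d1.r d1.a2)]
    simp
  have hSr2 : Ssub d2.r = ⟨n, t₂⟩ := by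
    simp only [hS]
    rw [if_pos d2.a2]
    simp
  have hS2 : ∀ f ∈ t₂.flat, f ≠ d2.r → Ssub f = d2.sub f := by
    intro f hf hfr
    simp only [hS]
    rw [if_pos hf, if_neg hfr]
  have hS1 : ∀ f ∈ t₁.flat, f ≠ d1.r → Ssub f = d1.sub f := by
    intro f hf hfr
    simp only [hS]
    rw [if_neg (hnotmem2 f hf), if_neg hfr]
  have hPr2 : Ppar d2.r = d1.r := by
    simp only [hP]
    rw [if_pos d2.a2]
    simp
  have hP2 : ∀ f ∈ t₂.flat, f ≠ d2.r → Ppar f = d2.par f := by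
    intro f hf hfr
    simp only [hP]
    rw [if_pos hf, if_neg hfr]
  have hP1 : ∀ f ∈ t₁.flat, Ppar f = d1.par f := by
    intro f hf
    simp only [hP]
    rw [if_neg (hnotmem2 f hf)]
  have hsubAll2 : ∀ f ∈ t₂.flat, hmEq (Ssub f).2 (d2.sub f).2 := by
    intro f hf
    by_cases hfr : f = d2.r
    · subst hfr
      rw [hSr2]
      exact hmEq_symm d2.a3
    · rw [hS2 f hf hfr]
      exact hmEq_refl _
  have hmv2 : ∀ f, f ∈ t₂.flat → f ≠ d2.r →
      f ∈ T.flat ∧ f ≠ d1.r ∧ Ppar f = d2.par f ∧ hmEq (Ssub f).2 (d2.sub f).2 := by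
    intro f hf hfr
    exact ⟨(hmemT f).mpr (Or.inr hf), hne1 f hf, hP2 f hf hfr, hsubAll2 f hf⟩
  have hmv1 : ∀ f, f ∈ t₁.flat → f ≠ d1.r →
      f ∈ T.flat ∧ f ≠ d1.r ∧ Ppar f = d1.par f ∧ hmEq (Ssub f).2 (d1.sub f).2 := by
    intro f hf hfr
    exact ⟨(hmemT f).mpr (Or.inl hf), hfr, hP1 f hf,
      hmEq_of_sigma_eq (hS1 f hf hfr)⟩
  have hTmono : ∀ {kk : ℕ} (x : HMd F kk), MembL x t₁ → MembL x T := by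
    intro kk x ⟨y, hy, he⟩
    exact ⟨y, (hmembT y).mpr (Or.inl hy), he⟩
  -- membership transport into Ssub g from d1.sub g, any g ∈ t₁.flat
  have hmono1 : ∀ g ∈ t₁.flat, ∀ {kk : ℕ} (x : HMd F kk),
      MembL x (d1.sub g).2 → MembL x (Ssub g).2 := by
    intro g hg kk x hx
    by_cases hgr : g = d1.r
    · subst hgr
      rw [hSr1]
      exact hTmono x ((membL_congr_right x d1.a3).mp hx)
    · rw [hS1 g hg hgr]
      exact hx
  have hmono2 : ∀ g ∈ t₂.flat, ∀ {kk : ℕ} (x : HMd F kk),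
      MembL x (d2.sub g).2 → MembL x (Ssub g).2 := by
    intro g hg kk x hx
    exact (membL_congr_right x (hmEq_symm (hsubAll2 g hg))).mp hx
  refine ⟨d1.r, Ssub, Ppar, ?_, ?_, ?_, ?_, ?_, ?_, ?_, ?_, ?_, ?_⟩
  -- a1
  · intro f
    rw [hacT]
    exact d1.a1 f
  -- a2
  · exact (hmemT d1.r).mpr (Or.inl d1.a2)
  -- a3
  · rw [hSr1]
    exact hmEq_refl _
  -- a4i
  · intro f hf
    by_cases hf2 : f ∈ t₂.flat
    · by_cases hfr : f = d2.r
      · subst hfr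
        rw [hSr2]
        exact Or.inl (Ingr.mem hmembTt2)
      · rw [hS2 f hf2 hfr]
        rcases d2.a4i f hf2 with hI | hE
        · exact Or.inl (Ingr.tail hI hmembTt2)
        · exfalso
          have h1 : 0 < HMd.acount f (d2.sub f).2 := (d2.a4a f hf2 f).mpr rfl
          rw [hmEq_acount hE f] at h1
          exact hfr ((d2.a1 f).mp h1)
    · have hf1 : f ∈ t₁.flat := ((hmemT f).mp hf).resolve_right hf2
      by_cases hfr : f = d1.r
      · subst hfr
        rw [hSr1]
        exact Or.inr (hmEq_refl _)
      · rw [hS1 f hf1 hfr]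
        rcases d1.a4i f hf1 with hI | hE
        · exact Or.inl (ingr_mono (fun y hy => (hmembT y).mpr (Or.inl hy)) hI)
        · exfalso
          have h1 : 0 < HMd.acount f (d1.sub f).2 := (d1.a4a f hf1 f).mpr rfl
          rw [hmEq_acount hE f] at h1
          exact hfr ((d1.a1 f).mp h1)
  -- a4t
  · intro f hf
    by_cases hf2 : f ∈ t₂.flat
    · by_cases hfr : f = d2.r
      · subst hfr; rw [hSr2]; exact ht2
      · rw [hS2 f hf2 hfr]; exact d2.a4t f hf2
    · have hf1 : f ∈ t₁.flat := ((hmemT f).mp hf).resolve_right hf2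
      by_cases hfr : f = d1.r
      · subst hfr; rw [hSr1]; exact hTtree
      · rw [hS1 f hf1 hfr]; exact d1.a4t f hf1
  -- a4a
  · intro f hf f'
    by_cases hf2 : f ∈ t₂.flat
    · by_cases hfr : f = d2.r
      · subst hfr; rw [hSr2]; exact d2.a1 f'
      · rw [hS2 f hf2 hfr]; exact d2.a4a f hf2 f'
    · have hf1 : f ∈ t₁.flat := ((hmemT f).mp hf).resolve_right hf2
      by_cases hfr : f = d1.r
      · subst hfr
        rw [hSr1]
        show 0 < HMd.acount f' T ↔ f' = d1.r
        rw [hacT]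
        exact d1.a1 f'
      · rw [hS1 f hf1 hfr]; exact d1.a4a f hf1 f'
  -- a5
  · intro k x f hI hc
    rcases ingr_add_cases (hT ▸ hI) with hI1 | ⟨y, hy, hcase⟩
    · obtain ⟨h1, h2, h3⟩ := d1.a5 k x f hI1 hc
      exact ⟨(hmemT f).mpr (Or.inl h1), h2,
        hmEq_trans h3 (hmEq_symm (hmEq_of_sigma_eq (hS1 f h1 h2)))⟩
    · obtain ⟨hcpos, rfl⟩ := memb_rep.mp hy
      rcases hcase with he | hI2
      · injection he with e1 e2
        subst e1
        rw [eq_of_heq e2] at hc ⊢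
        have hfr2 : f = d2.r := (d2.a1 f).mp hc
        subst hfr2
        refine ⟨(hmemT d2.r).mpr (Or.inr d2.a2), hne1 d2.r d2.a2, ?_⟩
        rw [hSr2]
        exact hmEq_refl _
      · obtain ⟨h1, h2, h3⟩ := d2.a5 k x f hI2 hc
        exact ⟨(hmemT f).mpr (Or.inr h1), hne1 f h1,
          hmEq_trans h3 (hmEq_symm (hsubAll2 f h1))⟩
  -- a6
  · intro p hp z hz
    by_cases hp2 : p ∈ t₂.flat
    · have hz2 : MembL z.2 (d2.sub p).2 :=
        (membL_congr_right z.2 (hsubAll2 p hp2)).mp hz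
      exact MClass.mono hmv2 (d2.a6 p hp2 z hz2)
    · have hp1 : p ∈ t₁.flat := ((hmemT p).mp hp).resolve_right hp2
      by_cases hpr : p = d1.r
      · subst hpr
        rw [hSr1] at hz
        obtain ⟨y, hy, he⟩ := hz
        rcases (hmembT y).mp hy with hy1 | rfl
        · have hz1 : MembL z.2 (d1.sub d1.r).2 :=
            (membL_congr_right z.2 d1.a3).mpr ⟨y, hy1, he⟩
          exact MClass.mono hmv1 (d1.a6 d1.r d1.a2 z hz1)
        · refine Or.inl ⟨d2.r, (hmemT d2.r).mpr (Or.inr d2.a2), hne1 d2.r d2.a2, hPr2, ?_⟩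
          rw [hSr2]
          exact he
      · rw [membL_congr_right z.2 (hmEq_of_sigma_eq (hS1 p hp1 hpr))] at hz
        exact MClass.mono hmv1 (d1.a6 p hp1 z hz)
  -- a7
  · intro f hf hfr
    by_cases hf2 : f ∈ t₂.flat
    · by_cases hfr2 : f = d2.r
      · subst hfr2
        rw [hPr2]
        refine ⟨(hmemT d1.r).mpr (Or.inl d1.a2), Or.inl ?_⟩
        rw [hSr1, hSr2]
        exact ⟨t₂, hmembTt2, hmEq_refl _⟩
      · obtain ⟨h1, h2⟩ := d2.a7 f hf2 hfr2
        rw [hP2 f hf2 hfr2]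
        refine ⟨(hmemT (d2.par f)).mpr (Or.inr h1), ?_⟩
        rcases h2 with h2 | ⟨z, hz1, hz2, hz3⟩
        · left
          exact hmono2 _ h1 _
            ((membL_congr_left (hsubAll2 f hf2) _).mpr h2)
        · right
          exact ⟨z, hmono2 _ h1 _ hz1, hz2,
            (membL_congr_left (hsubAll2 f hf2) _).mpr hz3⟩
    · have hf1 : f ∈ t₁.flat := ((hmemT f).mp hf).resolve_right hf2
      obtain ⟨h1, h2⟩ := d1.a7 f hf1 hfr
      rw [hP1 f hf1]
      refine ⟨(hmemT (d1.par f)).mpr (Or.inl h1), ?_⟩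
      rcases h2 with h2 | ⟨z, hz1, hz2, hz3⟩
      · left
        exact hmono1 _ h1 _
          ((membL_congr_left (hmEq_of_sigma_eq (hS1 f hf1 hfr)) _).mpr h2)
      · right
        exact ⟨z, hmono1 _ h1 _ hz1, hz2,
          (membL_congr_left (hmEq_of_sigma_eq (hS1 f hf1 hfr)) _).mpr hz3⟩
  -- a8
  · intro f hf
    by_cases hf2 : f ∈ t₂.flat
    · have chain2 := d2.a8 f hf2
      have chain2' : Relation.ReflTransGen
          (fun a b => a ∈ T.flat ∧ a ≠ d1.r ∧ Ppar a = b) f d2.r := by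
        refine Relation.ReflTransGen.mono (fun a b ⟨u1, u2, u3⟩ =>
          ⟨(hmemT a).mpr (Or.inr u1), hne1 a u1, (hP2 a u1 u2).trans u3⟩) _ _ chain2
      exact chain2'.tail ⟨(hmemT d2.r).mpr (Or.inr d2.a2), hne1 d2.r d2.a2, hPr2⟩
    · have hf1 : f ∈ t₁.flat := ((hmemT f).mp hf).resolve_right hf2
      refine Relation.ReflTransGen.mono (fun a b ⟨u1, u2, u3⟩ =>
        ⟨(hmemT a).mpr (Or.inl u1), u2, (hP1 a u1).trans u3⟩) _ _ (d1.a8 f hf1)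

def invData_grp {n : ℕ} {t : HMd F (n + 1)} (l : List (HMd F n × ℕ))
    (ht : TreeLike F (n + 1) t)
    (hall : ∀ p ∈ l, TreeLike F n p.1)
    (hdisj : ∀ p ∈ l, FDisj t p.1)
    (hpair : l.Pairwise (fun p q => FDisj p.1 q.1))
    (d : InvData t)
    (dl : ∀ p : HMd F n × ℕ, p ∈ l → InvData p.1) :
    InvData (HMd.up (n + 1) t + HMd.rep 1 (HMd.ofList l)) := by
  set G := HMd.ofList l with hG
  set T := HMd.up (n + 1) t + HMd.rep 1 G with hT
  have hTtree : TreeLike F (n + 2) T := TreeLike.grp l ht hall hdisj hpair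
  have hmembT : ∀ y : HMd F (n + 1), y.Memb T ↔ (y.Memb (HMd.up (n + 1) t) ∨ y = G) := by
    intro y
    rw [hT, memb_add, memb_rep]
    simp
  have hmembG : HMd.Memb G T := (hmembT G).mpr (Or.inr rfl)
  have hmemT : ∀ a : F, a ∈ T.flat ↔ (a ∈ t.flat ∨ ∃ p, p ∈ l ∧ 0 < p.2 ∧ a ∈ p.1.flat) := by
    intro a
    rw [hT, flat_add, Multiset.mem_add, flat_up, mem_flat_rep, hG, mem_flat_ofList]
    simp
  have hacT : ∀ f, HMd.acount f T = HMd.acount f t := by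
    intro f
    rw [hT, acount_add, acount_rep, acount_up]
    omega
  have huniq : ∀ p ∈ l, ∀ q ∈ l, ∀ a : F, a ∈ p.1.flat → a ∈ q.1.flat → p = q := by
    intro p hp q hq a hap haq
    by_contra hne
    have hpair' : l.Pairwise (fun p q => FDisj p.1 q.1 ∨ FDisj q.1 p.1) :=
      hpair.imp (fun h => Or.inl h)
    have hsymm : Symmetric (fun p q : HMd F n × ℕ => FDisj p.1 q.1 ∨ FDisj q.1 p.1) :=
      fun _ _ h => h.symm
    rcases (haveI : Std.Symm (fun p q : HMd F n × ℕ => FDisj p.1 q.1 ∨ FDisj q.1 p.1) :=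
      ⟨hsymm⟩; hpair'.forall hp hq hne) with h | h
    · exact h a hap haq
    · exact h a haq hap
  have hne : ∀ q ∈ l, ∀ f ∈ q.1.flat, f ≠ d.r :=
    fun q hq f hf h => hdisj q hq d.r d.a2 (h ▸ hf)
  set Pgrp : F → Prop := fun f => ∃ p, p ∈ l ∧ 0 < p.2 ∧ f ∈ p.1.flat with hPgrp
  have hnPgT : ∀ f ∈ t.flat, ¬ Pgrp f := by
    rintro f hf ⟨p, hp, _, hfp⟩
    exact hdisj p hp f hf hfp
  set Ssub : F → Σ k, HMd F k := fun f =>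
    if h : Pgrp f then
      (if f = (dl h.choose h.choose_spec.1).r then (⟨n, h.choose.1⟩ : Σ k, HMd F k)
        else (dl h.choose h.choose_spec.1).sub f)
    else (if f = d.r then ⟨n + 2, T⟩ else ⟨(d.sub f).1 + 1, HMd.up _ (d.sub f).2⟩) with hS
  set Ppar : F → F := fun f =>
    if h : Pgrp f then
      (if f = (dl h.choose h.choose_spec.1).r then d.r else (dl h.choose h.choose_spec.1).par f)
    else d.par f with hP
  -- evaluation on the t part
  have hSr : Ssub d.r = ⟨n + 2, T⟩ := by
    simp only [hS]
    rw [dif_neg (hnPgT d.r d.a2)]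
    simp
  have hStf : ∀ f ∈ t.flat, f ≠ d.r →
      Ssub f = ⟨(d.sub f).1 + 1, HMd.up _ (d.sub f).2⟩ := by
    intro f hf hfr
    simp only [hS]
    rw [dif_neg (hnPgT f hf), if_neg hfr]
  have hPtf : ∀ f ∈ t.flat, Ppar f = d.par f := by
    intro f hf
    simp only [hP]
    rw [dif_neg (hnPgT f hf)]
  -- evaluation on the group part
  have grp_eval : ∀ q (hq : q ∈ l), 0 < q.2 → ∀ f ∈ q.1.flat,
      (f = (dl q hq).r → Ssub f = ⟨n, q.1⟩ ∧ Ppar f = d.r) ∧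
      (f ≠ (dl q hq).r → Ssub f = (dl q hq).sub f ∧ Ppar f = (dl q hq).par f) := by
    intro q hq hq2 f hf
    have hPf : Pgrp f := ⟨q, hq, hq2, hf⟩
    have key : ∀ (p) (hp : p ∈ l), hPf.choose = p →
        (f = (dl p hp).r → Ssub f = ⟨n, p.1⟩ ∧ Ppar f = d.r) ∧
        (f ≠ (dl p hp).r → Ssub f = (dl p hp).sub f ∧ Ppar f = (dl p hp).par f) := by
      intro p hp e
      subst e
      constructor
      · intro hfr
        constructor
        · simp only [hS]
          rw [dif_pos hPf, if_pos hfr]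
        · simp only [hP]
          rw [dif_pos hPf, if_pos hfr]
      · intro hfr
        constructor
        · simp only [hS]
          rw [dif_pos hPf, if_neg hfr]
        · simp only [hP]
          rw [dif_pos hPf, if_neg hfr]
    have e : hPf.choose = q :=
      huniq _ hPf.choose_spec.1 q hq f hPf.choose_spec.2.2 hf
    exact key q hq e
  have hmembGq : ∀ q ∈ l, 0 < q.2 → HMd.Memb q.1 G :=
    fun q hq hq2 => memb_ofList.mpr ⟨q, hq, hq2, rfl⟩
  have hingrT : ∀ q ∈ l, 0 < q.2 → ∀ {kk : ℕ} {x : HMd F kk}, Ingr F x q.1 → Ingr F x T := by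
    intro q hq hq2 kk x hx
    exact Ingr.tail (Ingr.tail hx (hmembGq q hq hq2)) hmembG
  have hTofT : ∀ {kk : ℕ} (x : HMd F kk), MembL x t → MembL x T := by
    rintro kk x ⟨y, hy, he⟩
    exact ⟨HMd.up n y, (hmembT _).mpr (Or.inl (memb_up_fwd hy)),
      hmEq_trans he (hmEq_symm (hmEq_up y))⟩
  have hsubT : ∀ g ∈ t.flat, g ≠ d.r → hmEq (Ssub g).2 (d.sub g).2 := by
    intro g hg hgr
    rw [hStf g hg hgr]
    exact hmEq_up _
  have hmonoT : ∀ g ∈ t.flat, ∀ {kk : ℕ} (x : HMd F kk),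
      MembL x (d.sub g).2 → MembL x (Ssub g).2 := by
    intro g hg kk x hx
    by_cases hgr : g = d.r
    · subst hgr
      rw [hSr]
      exact hTofT x ((membL_congr_right x d.a3).mp hx)
    · exact (membL_congr_right x (hmEq_symm (hsubT g hg hgr))).mp hx
  have hmvT : ∀ f, f ∈ t.flat → f ≠ d.r →
      f ∈ T.flat ∧ f ≠ d.r ∧ Ppar f = d.par f ∧ hmEq (Ssub f).2 (d.sub f).2 :=
    fun f hf hfr => ⟨(hmemT f).mpr (Or.inl hf), hfr, hPtf f hf, hsubT f hf hfr⟩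
  have hmvG : ∀ q (hq : q ∈ l), 0 < q.2 → ∀ f, f ∈ q.1.flat → f ≠ (dl q hq).r →
      f ∈ T.flat ∧ f ≠ d.r ∧ Ppar f = (dl q hq).par f ∧
        hmEq (Ssub f).2 ((dl q hq).sub f).2 := by
    intro q hq hq2 f hf hfr
    obtain ⟨e1, e2⟩ := (grp_eval q hq hq2 f hf).2 hfr
    exact ⟨(hmemT f).mpr (Or.inr ⟨q, hq, hq2, hf⟩), hne q hq f hf, e2, hmEq_of_sigma_eq e1⟩
  have hmonoG : ∀ q (hq : q ∈ l), 0 < q.2 → ∀ g ∈ q.1.flat, ∀ {kk : ℕ} (x : HMd F kk),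
      MembL x ((dl q hq).sub g).2 → MembL x (Ssub g).2 := by
    intro q hq hq2 g hg kk x hx
    by_cases hgr : g = (dl q hq).r
    · rw [((grp_eval q hq hq2 g hg).1 hgr).1]
      rw [hgr] at hx
      exact (membL_congr_right x (dl q hq).a3).mp hx
    · exact (membL_congr_right x
        (hmEq_symm (hmEq_of_sigma_eq ((grp_eval q hq hq2 g hg).2 hgr).1))).mp hx
  refine ⟨d.r, Ssub, Ppar, ?_, ?_, ?_, ?_, ?_, ?_, ?_, ?_, ?_, ?_⟩
  -- a1
  · intro f
    rw [hacT]
    exact d.a1 f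
  -- a2
  · exact (hmemT d.r).mpr (Or.inl d.a2)
  -- a3
  · rw [hSr]
    exact hmEq_refl _
  -- a4i
  · intro f hf
    by_cases hPf : Pgrp f
    · obtain ⟨hq, hq2, hff⟩ := hPf.choose_spec
      set q := hPf.choose
      by_cases hfr : f = (dl q hq).r
      · rw [((grp_eval q hq hq2 f hff).1 hfr).1]
        exact Or.inl (Ingr.tail (Ingr.mem (hmembGq q hq hq2)) hmembG)
      · rw [((grp_eval q hq hq2 f hff).2 hfr).1]
        rcases (dl q hq).a4i f hff with hI | hE
        · exact Or.inl (hingrT q hq hq2 hI)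
        · exfalso
          have h1 : 0 < HMd.acount f ((dl q hq).sub f).2 := ((dl q hq).a4a f hff f).mpr rfl
          rw [hmEq_acount hE f] at h1
          exact hfr (((dl q hq).a1 f).mp h1)
    · have hf1 : f ∈ t.flat := ((hmemT f).mp hf).resolve_right hPf
      by_cases hfr : f = d.r
      · subst hfr
        rw [hSr]
        exact Or.inr (hmEq_refl _)
      · rw [hStf f hf1 hfr]
        rcases d.a4i f hf1 with hI | hE
        · exact Or.inl (ingr_mono (fun y hy => (hmembT y).mpr (Or.inl hy)) (ingr_up_fwd hI))
        · exfalso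
          have h1 : 0 < HMd.acount f (d.sub f).2 := (d.a4a f hf1 f).mpr rfl
          rw [hmEq_acount hE f] at h1
          exact hfr ((d.a1 f).mp h1)
  -- a4t
  · intro f hf
    by_cases hPf : Pgrp f
    · obtain ⟨hq, hq2, hff⟩ := hPf.choose_spec
      set q := hPf.choose
      by_cases hfr : f = (dl q hq).r
      · rw [((grp_eval q hq hq2 f hff).1 hfr).1]
        exact hall q hq
      · rw [((grp_eval q hq hq2 f hff).2 hfr).1]
        exact (dl q hq).a4t f hff
    · have hf1 : f ∈ t.flat := ((hmemT f).mp hf).resolve_right hPf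
      by_cases hfr : f = d.r
      · subst hfr; rw [hSr]; exact hTtree
      · rw [hStf f hf1 hfr]
        exact TreeLike.up (d.a4t f hf1)
  -- a4a
  · intro f hf f'
    by_cases hPf : Pgrp f
    · obtain ⟨hq, hq2, hff⟩ := hPf.choose_spec
      set q := hPf.choose
      by_cases hfr : f = (dl q hq).r
      · rw [((grp_eval q hq hq2 f hff).1 hfr).1]
        show 0 < HMd.acount f' q.1 ↔ f' = f
        rw [hfr]
        exact (dl q hq).a1 f'
      · rw [hmEq_acount (hmEq_of_sigma_eq ((grp_eval q hq hq2 f hff).2 hfr).1) f']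
        exact (dl q hq).a4a f hff f'
    · have hf1 : f ∈ t.flat := ((hmemT f).mp hf).resolve_right hPf
      by_cases hfr : f = d.r
      · subst hfr
        rw [hSr]
        show 0 < HMd.acount f' T ↔ f' = d.r
        rw [hacT]
        exact d.a1 f'
      · rw [hmEq_acount (hsubT f hf1 hfr) f']
        exact d.a4a f hf1 f'
  -- a5
  · intro k x f hI hc
    rcases ingr_add_cases (hT ▸ hI) with hI1 | ⟨y, hy, hcase⟩
    · obtain ⟨k', y, hy, he⟩ := ingr_up_inv hI1
      injection he with e1 e2
      subst e1
      rw [eq_of_heq e2] at hc ⊢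
      rw [acount_up] at hc
      obtain ⟨h1, h2, h3⟩ := d.a5 k' y f hy hc
      exact ⟨(hmemT f).mpr (Or.inl h1), h2,
        hmEq_trans (hmEq_up y) (hmEq_trans h3 (hmEq_symm (hsubT f h1 h2)))⟩
    · obtain ⟨-, rfl⟩ := memb_rep.mp hy
      rcases hcase with he | hI2
      · injection he with e1 e2
        subst e1
        rw [eq_of_heq e2] at hc
        rw [hG, acount_ofList] at hc
        omega
      · obtain ⟨q, hq, hq2, hcase2⟩ := ingr_ofList_cases (hG ▸ hI2)
        rcases hcase2 with he | hI3
        · injection he with e1 e2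
          subst e1
          rw [eq_of_heq e2] at hc ⊢
          have hfr : f = (dl q hq).r := ((dl q hq).a1 f).mp hc
          refine ⟨(hmemT f).mpr (Or.inr ⟨q, hq, hq2, hfr ▸ (dl q hq).a2⟩),
            hne q hq f (hfr ▸ (dl q hq).a2), ?_⟩
          rw [((grp_eval q hq hq2 f (hfr ▸ (dl q hq).a2)).1 hfr).1]
          exact hmEq_refl _
        · obtain ⟨h1, h2, h3⟩ := (dl q hq).a5 k x f hI3 hc
          obtain ⟨hT1, hT2, _, hT4⟩ := hmvG q hq hq2 f h1 h2
          exact ⟨hT1, hT2, hmEq_trans h3 (hmEq_symm hT4)⟩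
  -- a6
  · intro p hp z hz
    by_cases hPp : Pgrp p
    · obtain ⟨hq, hq2, hpf⟩ := hPp.choose_spec
      set q := hPp.choose
      by_cases hpr : p = (dl q hq).r
      · rw [((grp_eval q hq hq2 p hpf).1 hpr).1] at hz
        have hz' : MembL z.2 ((dl q hq).sub (dl q hq).r).2 :=
          (membL_congr_right z.2 (dl q hq).a3).mpr hz
        have := (dl q hq).a6 (dl q hq).r (dl q hq).a2 z hz'
        rw [hpr]
        exact MClass.mono (fun f hf hfr => hmvG q hq hq2 f hf hfr) this
      · rw [membL_congr_right z.2
          (hmEq_of_sigma_eq ((grp_eval q hq hq2 p hpf).2 hpr).1)] at hz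
        exact MClass.mono (fun f hf hfr => hmvG q hq hq2 f hf hfr)
          ((dl q hq).a6 p hpf z hz)
    · have hp1 : p ∈ t.flat := ((hmemT p).mp hp).resolve_right hPp
      by_cases hpr : p = d.r
      · subst hpr
        rw [hSr] at hz
        obtain ⟨y, hy, he⟩ := hz
        rcases (hmembT y).mp hy with hy1 | rfl
        · obtain ⟨y₀, hy₀, rfl⟩ := (memb_up_succ t y).mp hy1
          have hz1 : MembL z.2 (d.sub d.r).2 :=
            (membL_congr_right z.2 d.a3).mpr ⟨y₀, hy₀, hmEq_trans he (hmEq_up y₀)⟩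
          exact MClass.mono hmvT (d.a6 d.r d.a2 z hz1)
        · refine Or.inr ⟨fun a => (hmEq_acount he a).trans (by rw [hG, acount_ofList]), ?_⟩
          intro w hw
          have hwG : MembL w.2 G := (membL_congr_right w.2 he).mp hw
          obtain ⟨y', hy', he'⟩ := hwG
          obtain ⟨q, hq, hq2, rfl⟩ := memb_ofList.mp (hG ▸ hy')
          refine ⟨(dl q hq).r, (hmemT _).mpr (Or.inr ⟨q, hq, hq2, (dl q hq).a2⟩),
            hne q hq _ (dl q hq).a2, ((grp_eval q hq hq2 _ (dl q hq).a2).1 rfl).2, ?_⟩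
          rw [((grp_eval q hq hq2 _ (dl q hq).a2).1 rfl).1]
          exact he'
      · rw [membL_congr_right z.2 (hsubT p hp1 hpr)] at hz
        exact MClass.mono hmvT (d.a6 p hp1 z hz)
  -- a7
  · intro f hf hfr
    by_cases hPf : Pgrp f
    · obtain ⟨hq, hq2, hff⟩ := hPf.choose_spec
      set q := hPf.choose
      by_cases hfr2 : f = (dl q hq).r
      · obtain ⟨e1, e2⟩ := (grp_eval q hq hq2 f hff).1 hfr2
        rw [e2]
        refine ⟨(hmemT d.r).mpr (Or.inl d.a2), Or.inr ?_⟩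
        refine ⟨⟨n + 1, G⟩, ?_, fun a => by rw [hG, acount_ofList], ?_⟩
        · rw [hSr]
          exact ⟨G, hmembG, hmEq_refl _⟩
        · rw [e1]
          exact ⟨q.1, hmembGq q hq hq2, hmEq_refl _⟩
      · obtain ⟨h1, h2⟩ := (dl q hq).a7 f hff hfr2
        obtain ⟨e1, e2⟩ := (grp_eval q hq hq2 f hff).2 hfr2
        rw [e2]
        refine ⟨(hmemT _).mpr (Or.inr ⟨q, hq, hq2, h1⟩), ?_⟩
        rcases h2 with h2 | ⟨z, hz1, hz2, hz3⟩
        · left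
          exact hmonoG q hq hq2 _ h1 _
            ((membL_congr_left (hmEq_of_sigma_eq e1) _).mpr h2)
        · right
          exact ⟨z, hmonoG q hq hq2 _ h1 _ hz1, hz2,
            (membL_congr_left (hmEq_of_sigma_eq e1) _).mpr hz3⟩
    · have hf1 : f ∈ t.flat := ((hmemT f).mp hf).resolve_right hPf
      obtain ⟨h1, h2⟩ := d.a7 f hf1 hfr
      rw [hPtf f hf1]
      refine ⟨(hmemT _).mpr (Or.inl h1), ?_⟩
      rcases h2 with h2 | ⟨z, hz1, hz2, hz3⟩
      · left
        exact hmonoT _ h1 _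
          ((membL_congr_left (hsubT f hf1 hfr) _).mpr h2)
      · right
        exact ⟨z, hmonoT _ h1 _ hz1, hz2,
          (membL_congr_left (hsubT f hf1 hfr) _).mpr hz3⟩
  -- a8
  · intro f hf
    by_cases hPf : Pgrp f
    · obtain ⟨hq, hq2, hff⟩ := hPf.choose_spec
      set q := hPf.choose
      have chain := (dl q hq).a8 f hff
      have chain' : Relation.ReflTransGen
          (fun a b => a ∈ T.flat ∧ a ≠ d.r ∧ Ppar a = b) f (dl q hq).r := by
        refine Relation.ReflTransGen.mono (fun a b ⟨u1, u2, u3⟩ =>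
          ⟨(hmemT a).mpr (Or.inr ⟨q, hq, hq2, u1⟩), hne q hq a u1,
            (((grp_eval q hq hq2 a u1).2 u2).2).trans u3⟩) _ _ chain
      exact chain'.tail ⟨(hmemT _).mpr (Or.inr ⟨q, hq, hq2, (dl q hq).a2⟩),
        hne q hq _ (dl q hq).a2, ((grp_eval q hq hq2 _ (dl q hq).a2).1 rfl).2⟩
    · have hf1 : f ∈ t.flat := ((hmemT f).mp hf).resolve_right hPf
      refine Relation.ReflTransGen.mono (fun a b ⟨u1, u2, u3⟩ =>
        ⟨(hmemT a).mpr (Or.inl u1), u2, (hPtf a u1).trans u3⟩) _ _ (d.a8 f hf1)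

theorem treelike_invData {n : ℕ} {t : HMd F n} (ht : TreeLike F n t) :
    Nonempty (InvData t) := by
  induction ht with
  | sing n f => exact ⟨invData_single n f⟩
  | up ht ih => exact ⟨invData_up ht ih.some⟩
  | sol c h1 h2 hd ih1 ih2 => exact ⟨invData_sol c h1 h2 hd ih1.some ih2.some⟩
  | grp l ht hall hdisj hpair ih ihl =>
    exact ⟨invData_grp l ht hall hdisj hpair ih.some (fun p hp => (ihl p hp).some)⟩

theorem inv_isParent {n : ℕ} {t : HMd F n} (d : InvData t) :
    ∀ f ∈ t.flat, f ≠ d.r → IsParentIn t f (d.par f) := by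
  intro f hf hfr
  obtain ⟨hp1, hwit⟩ := d.a7 f hf hfr
  have hRf : RootedIngr t f (d.sub f).2 :=
    ⟨d.a4i f hf, d.a4t f hf, (d.a4a f hf f).mpr rfl⟩
  have h4i := d.a4i _ hp1
  have h4t := d.a4t _ hp1
  have h4a := (d.a4a _ hp1 (d.par f)).mpr rfl
  rcases hwit with hw | ⟨z, hz1, hz2, hz3⟩
  · rcases hsp : d.sub (d.par f) with ⟨a, mp⟩
    rw [hsp] at hw h4i h4t h4a
    cases a with
    | zero => exact hw.elim
    | succ j =>
      obtain ⟨y, hy, he⟩ := hw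
      exact ⟨j, mp, ⟨h4i, h4t, h4a⟩, (d.sub f).1, (d.sub f).2, hRf, Or.inl ⟨y, hy, he⟩⟩
  · rcases hzs : z with ⟨b, zz⟩
    rw [hzs] at hz1 hz2 hz3
    cases b with
    | zero => exact hz3.elim
    | succ i =>
      obtain ⟨w, hwm, hwe⟩ := hz3
      rcases hsp : d.sub (d.par f) with ⟨a, mp⟩
      rw [hsp] at hz1 h4i h4t h4a
      cases a with
      | zero => exact hz1.elim
      | succ j =>
        obtain ⟨z', hz', hze⟩ := hz1
        refine ⟨j, mp, ⟨h4i, h4t, h4a⟩, (d.sub f).1, (d.sub f).2, hRf,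
          Or.inr ⟨i, zz, ⟨z', hz', hze⟩, ?_, ⟨w, hwm, hwe⟩⟩⟩
        exact (noAtoms_iff zz).mpr hz2

theorem treelike_tree_final {n : ℕ} {t : HMd F n} (ht : TreeLike F n t) :
    (∀ f ∈ HMd.flat t, HMd.acount f t = 0 →
      ∃! p, p ∈ HMd.flat t ∧ IsParentIn t f p) ∧
    (∀ r : F, 0 < HMd.acount r t →
      ∀ f ∈ HMd.flat t, Relation.ReflTransGen (fun a b => IsParentIn t a b) f r) := by
  obtain ⟨d⟩ := treelike_invData ht
  constructor
  · intro f hf hac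
    have hroot : 0 < HMd.acount d.r t := (d.a1 d.r).mpr rfl
    have hfr : f ≠ d.r := fun h => by
      rw [← h, hac] at hroot
      exact absurd hroot (lt_irrefl 0)
    refine ⟨d.par f, ⟨(d.a7 f hf hfr).1, inv_isParent d f hf hfr⟩, ?_⟩
    rintro p' ⟨hp'm, hp'⟩
    obtain ⟨kp, xp, ⟨hxpI, hxpT, hxpA⟩, kf, xf, ⟨hxfI, hxfT, hxfA⟩, hOr⟩ := hp'
    have hxp : hmEq xp (d.sub p').2 := by
      rcases hxpI with hI | hE
      · exact (d.a5 _ xp p' hI hxpA).2.2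
      · have hpr : p' = d.r := (d.a1 p').mp (by rw [← hmEq_acount hE p']; exact hxpA)
        rw [hpr]
        exact hmEq_trans hE (hmEq_symm d.a3)
    have hxf : hmEq xf (d.sub f).2 := by
      rcases hxfI with hI | hE
      · exact (d.a5 _ xf f hI hxfA).2.2
      · exfalso
        have hfd : f = d.r := (d.a1 f).mp (by rw [← hmEq_acount hE f]; exact hxfA)
        rw [← hfd, hac] at hroot
        exact absurd hroot (lt_irrefl 0)
    have key : ∀ f₁, f₁ ∈ t.flat → f₁ ≠ d.r → d.par f₁ = p' →
        hmEq xf (d.sub f₁).2 → p' = d.par f := by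
      intro f₁ m1 m2 m3 m4
      have he : hmEq (d.sub f).2 (d.sub f₁).2 := hmEq_trans (hmEq_symm hxf) m4
      have hcnt : 0 < HMd.acount f₁ (d.sub f).2 := by
        rw [hmEq_acount he f₁]
        exact (d.a4a f₁ m1 f₁).mpr rfl
      have hf₁ : f₁ = f := (d.a4a f hf f₁).mp hcnt
      rw [← m3, hf₁]
    rcases hOr with hm | ⟨kg, g, hg1, hg2, hg3⟩
    · have hms : MembL xf (d.sub p').2 := (membL_congr_right xf hxp).mp hm
      rcases d.a6 p' hp'm ⟨kf, xf⟩ hms with ⟨f₁, m1, m2, m3, m4⟩ | ⟨hz, _⟩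
      · exact key f₁ m1 m2 m3 m4
      · exfalso
        have := hz f
        exact absurd hxfA (by rw [this]; exact lt_irrefl 0)
    · have hgs : MembL g (d.sub p').2 := (membL_congr_right g hxp).mp hg1
      rcases d.a6 p' hp'm ⟨kg + 1, g⟩ hgs with ⟨f₁, m1, m2, m3, m4⟩ | ⟨_, hinner⟩
      · exfalso
        have h1 : 0 < HMd.acount f₁ (d.sub f₁).2 := (d.a4a f₁ m1 f₁).mpr rfl
        rw [← hmEq_acount m4 f₁] at h1
        have := (noAtoms_iff g).mp hg2 f₁
        rw [this] at h1
        exact absurd h1 (lt_irrefl 0)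
      · obtain ⟨f₂, m1, m2, m3, m4⟩ := hinner ⟨kf, xf⟩ hg3
        exact key f₂ m1 m2 m3 m4
  · intro r hr f hf
    have hrr : r = d.r := (d.a1 r).mp hr
    subst hrr
    exact Relation.ReflTransGen.mono (fun a b ⟨u1, u2, u3⟩ => u3 ▸ inv_isParent d a u1 u2) _ _ (d.a8 f hf)
end Aux

/-- the structure extracted from a tree-like multiset (flattened support,
root, parent function) is a tree: the parent function is well defined on non-root nodes,
and every node reaches the root by finitely many parent steps. -/
theorem treelike_gives_tree (F : Type) (n : ℕ) (t : HMd F n) (ht : TreeLike F n t) :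
    (∀ f ∈ HMd.flat t, HMd.acount f t = 0 →
      ∃! p, p ∈ HMd.flat t ∧ IsParentIn t f p) ∧
    (∀ r : F, 0 < HMd.acount r t →
      ∀ f ∈ HMd.flat t, Relation.ReflTransGen (fun a b => IsParentIn t a b) f r) :=
  treelike_tree_final ht

end
end CFDPaper
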